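/- Let R : M_ℝ(Ω,Σ) → trace-class self-adjoint operators be a linear reduction map (mapping probability measures onto density operators, with an adjoint R' mapping bounded self-adjoint operators to bounded measurable functions). Then for each rank-one projection P, the set {ω ∈ Ω : R δ_ω = P} is measurable, and if R μ = P for a probability measure μ, then μ({ω : R δ_ω = P}) = 1; in particular {ω : R δ_ω = P} is nonempty. -/

import Mathlib

open MeasureTheory Topology Filter
open scoped InnerProductSpace

set_option linter.unusedSectionVars false

/-- The rank-one operator `|φ⟩⟨φ|`. -/
noncomputable def rankOne {H : Type*} [NormedAddCommGroup H] [InnerProductSpace ℂ H]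
    (φ : H) : H →L[ℂ] H := (innerSL ℂ φ).smulRight φ

/-- The set of rank-one orthogonal projections (pure states / projective Hilbert space). -/
noncomputable def projSet (H : Type*) [NormedAddCommGroup H] [InnerProductSpace ℂ H] :
    Set (H →L[ℂ] H) := {T | ∃ φ : H, ‖φ‖ = 1 ∧ T = rankOne φ}

/-- The trace of an operator computed along a Hilbert basis. -/
noncomputable def traceAlong {H ι : Type*} [NormedAddCommGroup H] [InnerProductSpace ℂ H]
    (b : HilbertBasis ι ℂ H) (A : H →L[ℂ] H) : ℂ :=
  ∑' i, inner ℂ (b i) (A (b i))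

/-- `W` is a density operator: positive, trace class, with trace one
(trace computed along the Hilbert basis `b`). -/
noncomputable def IsDensityOp {H ι : Type*} [NormedAddCommGroup H] [InnerProductSpace ℂ H]
    [CompleteSpace H] (b : HilbertBasis ι ℂ H) (W : H →L[ℂ] H) : Prop :=
  W.IsPositive ∧ HasSum (fun i => (inner ℂ (b i) (W (b i)) : ℂ)) 1

section Aux

variable {H ι : Type*} [NormedAddCommGroup H] [InnerProductSpace ℂ H] [CompleteSpace H]

lemma rankOne_apply (φ x : H) : rankOne φ x = ⟪φ, x⟫_ℂ • φ := rfl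

lemma rankOne_selfAdjoint (φ : H) : IsSelfAdjoint (rankOne φ) := by
  rw [ContinuousLinearMap.isSelfAdjoint_iff_isSymmetric]
  intro x y
  show ⟪rankOne φ x, y⟫_ℂ = ⟪x, rankOne φ y⟫_ℂ
  simp only [rankOne_apply, inner_smul_left, inner_smul_right, inner_conj_symm]
  ring

lemma conj_mul_self (z : ℂ) : (starRingEnd ℂ) z * z = ((‖z‖^2 : ℝ) : ℂ) := by
  rw [mul_comm, Complex.mul_conj']; push_cast; ring

/-- The trace of `W * |φ⟩⟨φ|` equals `⟪φ, W φ⟫`. -/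
lemma traceAlong_mul_rankOne (b : HilbertBasis ι ℂ H) (W : H →L[ℂ] H) (φ : H) :
    traceAlong b (W * rankOne φ) = ⟪φ, W φ⟫_ℂ := by
  have h : ∀ i, (inner ℂ (b i) ((W * rankOne φ) (b i)) : ℂ) = ⟪φ, b i⟫_ℂ * ⟪b i, W φ⟫_ℂ := by
    intro i
    simp only [ContinuousLinearMap.mul_apply, rankOne_apply, ContinuousLinearMap.map_smul,
      inner_smul_right]
  rw [traceAlong, tsum_congr h, b.tsum_inner_mul_inner φ (W φ)]

/-- Square root data for a density operator. -/
lemma density_sqrt (b : HilbertBasis ι ℂ H) {W : H →L[ℂ] H} (hW : IsDensityOp b W) :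
    ∃ S : H →L[ℂ] H, IsSelfAdjoint S ∧ (∀ x, W x = S (S x)) ∧
      (∀ x : H, (inner ℂ x (W x) : ℂ) = ((‖S x‖^2 : ℝ) : ℂ)) ∧
      HasSum (fun i => ‖S (b i)‖^2) 1 := by
  have hW0 : 0 ≤ W := (ContinuousLinearMap.nonneg_iff_isPositive W).2 hW.1
  obtain ⟨S, hSa, hSS⟩ : ∃ S : H →L[ℂ] H, IsSelfAdjoint S ∧ S * S = W := by
    refine ⟨CFC.sqrt W, ?_, CFC.sqrt_mul_sqrt_self W hW0⟩
    have h0 : (0 : H →L[ℂ] H) ≤ CFC.sqrt W := CFC.sqrt_nonneg W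
    exact ((ContinuousLinearMap.nonneg_iff_isPositive _).1 h0).isSelfAdjoint
  have happ : ∀ x, W x = S (S x) := by
    intro x; rw [← hSS]; rfl
  have hinner : ∀ x : H, (inner ℂ x (W x) : ℂ) = ((‖S x‖^2 : ℝ) : ℂ) := by
    intro x
    rw [happ x, ← ContinuousLinearMap.adjoint_inner_left, hSa.adjoint_eq,
      inner_self_eq_norm_sq_to_K]
    norm_cast
  refine ⟨S, hSa, happ, hinner, ?_⟩
  have h1 : HasSum (fun i => ((‖S (b i)‖^2 : ℝ) : ℂ)) ((1 : ℝ) : ℂ) := by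
    have h := hW.2
    simp only [hinner] at h
    simpa using h
  exact Complex.hasSum_ofReal.1 h1

/-- Parseval: for self-adjoint S, `∑ ‖⟪u, S (b i)⟫‖² = ‖S u‖²`. -/
lemma hasSum_inner_sq (b : HilbertBasis ι ℂ H) {S : H →L[ℂ] H} (hSa : IsSelfAdjoint S)
    (u : H) : HasSum (fun i => ‖⟪u, S (b i)⟫_ℂ‖^2) (‖S u‖^2) := by
  have h1 : HasSum (fun i => (⟪S u, b i⟫_ℂ * ⟪b i, S u⟫_ℂ)) ⟪S u, S u⟫_ℂ :=
    b.hasSum_inner_mul_inner (S u) (S u)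
  have h2 : ∀ i, (⟪S u, b i⟫_ℂ * ⟪b i, S u⟫_ℂ) = ((‖⟪u, S (b i)⟫_ℂ‖^2 : ℝ) : ℂ) := by
    intro i
    have hswap : ⟪u, S (b i)⟫_ℂ = ⟪S u, b i⟫_ℂ := by
      rw [← ContinuousLinearMap.adjoint_inner_left, hSa.adjoint_eq]
    have hz : ⟪S u, b i⟫_ℂ = (starRingEnd ℂ) ⟪b i, S u⟫_ℂ := (inner_conj_symm (S u) (b i)).symm
    rw [hswap, hz, conj_mul_self, RCLike.norm_conj]
  have h3 : (⟪S u, S u⟫_ℂ) = ((‖S u‖^2 : ℝ) : ℂ) := by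
    rw [inner_self_eq_norm_sq_to_K]; norm_cast
  rw [funext h2, h3] at h1
  exact Complex.hasSum_ofReal.1 h1

/-- Key bound: for a density operator and unit vector, `⟪φ, W φ⟫` is real in `[0,1]`. -/
lemma density_inner_mem (b : HilbertBasis ι ℂ H) {W : H →L[ℂ] H} (hW : IsDensityOp b W)
    {φ : H} (hφ : ‖φ‖ = 1) :
    ∃ r : ℝ, (inner ℂ φ (W φ) : ℂ) = (r : ℂ) ∧ 0 ≤ r ∧ r ≤ 1 := by
  obtain ⟨S, hSa, happ, hinner, hsum⟩ := density_sqrt b hW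
  refine ⟨‖S φ‖^2, hinner φ, by positivity, ?_⟩
  have h1 : HasSum (fun i => ‖⟪φ, S (b i)⟫_ℂ‖^2) (‖S φ‖^2) := hasSum_inner_sq b hSa φ
  refine hasSum_le (fun i => ?_) h1 hsum
  have := norm_inner_le_norm (𝕜 := ℂ) φ (S (b i))
  rw [hφ, one_mul] at this
  exact pow_le_pow_left₀ (norm_nonneg _) this 2

/-- A density operator with `⟪φ, W φ⟫ = 1` for a unit vector `φ` equals `|φ⟩⟨φ|`. -/
lemma density_eq_rankOne (b : HilbertBasis ι ℂ H) {W : H →L[ℂ] H} (hW : IsDensityOp b W)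
    {φ : H} (hφ : ‖φ‖ = 1) (h1 : (inner ℂ φ (W φ) : ℂ) = 1) : W = rankOne φ := by
  obtain ⟨S, hSa, happ, hinner, hsum⟩ := density_sqrt b hW
  have hφφ : ⟪φ, φ⟫_ℂ = 1 := by
    rw [inner_self_eq_norm_sq_to_K, hφ]; norm_num
  have hSφ : ‖S φ‖^2 = 1 := by
    have := (hinner φ).symm.trans h1
    exact_mod_cast this
  -- For any ψ orthogonal to φ, W ψ = 0.
  have hker : ∀ ψ : H, ⟪φ, ψ⟫_ℂ = 0 → W ψ = 0 := by
    intro ψ hψ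
    rcases eq_or_ne ψ 0 with rfl | hne
    · simp
    have hSψ : S ψ = 0 := by
      have hnz : (‖ψ‖ : ℂ) ≠ 0 := by
        simpa using norm_ne_zero_iff.2 hne
      set u : H := ((‖ψ‖⁻¹ : ℝ) : ℂ) • ψ with hu
      have hun : ‖u‖ = 1 := by
        rw [hu, norm_smul]
        simp [inv_mul_cancel₀ (norm_ne_zero_iff.2 hne)]
      have huφ : ⟪φ, u⟫_ℂ = 0 := by
        rw [hu, inner_smul_right, hψ, mul_zero]
      have huφ' : ⟪u, φ⟫_ℂ = 0 := by
        rw [← inner_conj_symm, huφ, map_zero]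
      have hON : Orthonormal ℂ (fun t : Bool => if t then u else φ) := by
        rw [orthonormal_iff_ite]
        intro i j
        rcases i <;> rcases j <;>
          simp only [if_true, Bool.false_eq_true, reduceIte, if_false]
        · exact hφφ
        · exact huφ
        · exact huφ'
        · rw [inner_self_eq_norm_sq_to_K, hun]; norm_num
      have hpt : ∀ x : H, ‖⟪φ, x⟫_ℂ‖^2 + ‖⟪u, x⟫_ℂ‖^2 ≤ ‖x‖^2 := by
        intro x
        have := hON.sum_inner_products_le (s := Finset.univ) x
        rw [Fintype.sum_bool] at this
        simp only [if_true, Bool.false_eq_true, reduceIte] at this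
        linarith
      have h1' : HasSum (fun i => ‖⟪φ, S (b i)⟫_ℂ‖^2 + ‖⟪u, S (b i)⟫_ℂ‖^2)
          (‖S φ‖^2 + ‖S u‖^2) :=
        (hasSum_inner_sq b hSa φ).add (hasSum_inner_sq b hSa u)
      have hle : ‖S φ‖^2 + ‖S u‖^2 ≤ 1 :=
        hasSum_le (fun i => hpt (S (b i))) h1' hsum
      rw [hSφ] at hle
      have hle0 : ‖S u‖^2 ≤ 0 := by linarith
      have hSu : S u = 0 := by
        have h := le_antisymm hle0 (by positivity)
        have := pow_eq_zero_iff (n := 2) (by norm_num) |>.1 h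
        exact norm_eq_zero.1 this
      have hψu : ψ = (‖ψ‖ : ℂ) • u := by
        rw [hu, smul_smul]
        rw [show ((‖ψ‖ : ℂ)) * ((‖ψ‖⁻¹ : ℝ) : ℂ) = 1 by
          push_cast
          exact mul_inv_cancel₀ hnz]
        rw [one_smul]
      rw [hψu, ContinuousLinearMap.map_smul, hSu, smul_zero]
    rw [happ, hSψ, map_zero]
  have hWsa : IsSelfAdjoint W := hW.1.isSelfAdjoint
  -- W φ = φ
  have hWφ : W φ = φ := by
    set ψ₀ : H := W φ - φ with hψ₀
    have hφψ₀ : ⟪φ, ψ₀⟫_ℂ = 0 := by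
      rw [hψ₀, inner_sub_right, h1, hφφ, sub_self]
    have hWψ₀ : W ψ₀ = 0 := hker ψ₀ hφψ₀
    have hinner0 : ⟪ψ₀, W φ⟫_ℂ = 0 := by
      rw [← ContinuousLinearMap.adjoint_inner_left, hWsa.adjoint_eq, hWψ₀, inner_zero_left]
    have hz : ⟪ψ₀, ψ₀⟫_ℂ = 0 := by
      have hWφψ : W φ = φ + ψ₀ := by rw [hψ₀]; try abel
      rw [hWφψ, inner_add_right] at hinner0
      have h0 : ⟪ψ₀, φ⟫_ℂ = 0 := by
        rw [← inner_conj_symm, hφψ₀, map_zero]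
      rwa [h0, zero_add] at hinner0
    have h0 := inner_self_eq_zero.1 hz
    rw [hψ₀, sub_eq_zero] at h0
    exact h0
  ext x
  have hx : x = ⟪φ, x⟫_ℂ • φ + (x - ⟪φ, x⟫_ℂ • φ) := by abel
  have hxo : ⟪φ, x - ⟪φ, x⟫_ℂ • φ⟫_ℂ = 0 := by
    rw [inner_sub_right, inner_smul_right, hφφ, mul_one, sub_self]
  calc W x = W (⟪φ, x⟫_ℂ • φ) + W (x - ⟪φ, x⟫_ℂ • φ) := by rw [← map_add]; congr 1; try abel
    _ = ⟪φ, x⟫_ℂ • φ := by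
        rw [hker _ hxo, ContinuousLinearMap.map_smul, hWφ, add_zero]
    _ = rankOne φ x := rfl

/-- The rank-one projection is a density operator. -/
lemma rankOne_isDensityOp (b : HilbertBasis ι ℂ H) {φ : H} (hφ : ‖φ‖ = 1) :
    IsDensityOp b (rankOne φ) := by
  constructor
  · refine ⟨ContinuousLinearMap.isSelfAdjoint_iff_isSymmetric.1 (rankOne_selfAdjoint φ), fun x => ?_⟩
    rw [ContinuousLinearMap.reApplyInnerSelf_apply]
    rw [rankOne_apply, inner_smul_left, conj_mul_self]
    rw [show RCLike.re ((‖⟪φ, x⟫_ℂ‖^2 : ℝ) : ℂ) = ‖⟪φ, x⟫_ℂ‖^2 from Complex.ofReal_re _]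
    positivity
  · have h : ∀ i, (inner ℂ (b i) (rankOne φ (b i)) : ℂ) = ⟪φ, b i⟫_ℂ * ⟪b i, φ⟫_ℂ := by
      intro i
      rw [rankOne_apply, inner_smul_right]
      try ring
    rw [funext h]
    have := b.hasSum_inner_mul_inner φ φ
    rw [inner_self_eq_norm_sq_to_K, hφ] at this
    simpa using this

end Aux

theorem stmt18 {H ι Ω : Type*} [NormedAddCommGroup H] [InnerProductSpace ℂ H] [CompleteSpace H]
    [SecondCountableTopology H] [MeasurableSpace Ω] (b : HilbertBasis ι ℂ H)
    (R : SignedMeasure Ω →ₗ[ℝ] (H →L[ℂ] H))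
    (R' : (H →L[ℂ] H) → Ω → ℝ)
    (hmeas : ∀ A : H →L[ℂ] H, IsSelfAdjoint A → Measurable (R' A))
    (hbdd : ∀ A : H →L[ℂ] H, IsSelfAdjoint A → ∃ C : ℝ, ∀ ω, |R' A ω| ≤ C)
    (hdual : ∀ (μ : Measure Ω) [IsProbabilityMeasure μ], ∀ A : H →L[ℂ] H, IsSelfAdjoint A →
        traceAlong b (R μ.toSignedMeasure * A) = ((∫ ω, R' A ω ∂μ : ℝ) : ℂ))
    (hstates : ∀ (μ : Measure Ω) [IsProbabilityMeasure μ], IsDensityOp b (R μ.toSignedMeasure))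
    (hsurj : ∀ W : H →L[ℂ] H, IsDensityOp b W →
        ∃ (μ : Measure Ω) (hμ : IsProbabilityMeasure μ),
          R (letI := hμ; μ.toSignedMeasure) = W)
    (P : H →L[ℂ] H) (hP : P ∈ projSet H) :
    MeasurableSet {ω : Ω | R (Measure.dirac ω).toSignedMeasure = P} ∧
    (∀ (μ : Measure Ω) [IsProbabilityMeasure μ], R μ.toSignedMeasure = P →
        μ {ω : Ω | R (Measure.dirac ω).toSignedMeasure = P} = 1) ∧
    {ω : Ω | R (Measure.dirac ω).toSignedMeasure = P}.Nonempty := by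
  obtain ⟨φ, hφ, hPeq⟩ := hP
  have hPsa : IsSelfAdjoint P := hPeq ▸ rankOne_selfAdjoint φ
  set f := R' P with hf
  have hfmeas : Measurable f := hmeas P hPsa
  have hφφ : ⟪φ, φ⟫_ℂ = 1 := by
    rw [inner_self_eq_norm_sq_to_K, hφ]; norm_num
  have hPP : traceAlong b (P * P) = 1 := by
    conv_lhs => rw [hPeq]
    rw [traceAlong_mul_rankOne b (rankOne φ) φ, rankOne_apply, inner_smul_right, hφφ, mul_one]
  have hdirac : ∀ ω : Ω,
      traceAlong b (R (Measure.dirac ω).toSignedMeasure * P) = ((f ω : ℝ) : ℂ) := by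
    intro ω
    rw [hdual (Measure.dirac ω) P hPsa]
    congr 1
    exact integral_dirac' f ω hfmeas.stronglyMeasurable
  have hset : {ω : Ω | R (Measure.dirac ω).toSignedMeasure = P} = f ⁻¹' {1} := by
    ext ω
    simp only [Set.mem_setOf_eq, Set.mem_preimage, Set.mem_singleton_iff]
    constructor
    · intro h
      have h2 := hdirac ω
      rw [h, hPP] at h2
      exact_mod_cast h2.symm
    · intro h
      have hW := hstates (Measure.dirac ω)
      have h1 : (inner ℂ φ ((R (Measure.dirac ω).toSignedMeasure) φ) : ℂ) = 1 := by
        have h2 := hdirac ω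
        rw [hPeq, traceAlong_mul_rankOne] at h2
        rw [h2, h]
        norm_num
      rw [hPeq]
      exact density_eq_rankOne b hW hφ h1
  have hms : MeasurableSet (f ⁻¹' {1}) := hfmeas (measurableSet_singleton 1)
  have hmain : ∀ (μ : Measure Ω) [IsProbabilityMeasure μ], R μ.toSignedMeasure = P →
      μ {ω : Ω | R (Measure.dirac ω).toSignedMeasure = P} = 1 := by
    intro μ hprob hRμ
    rw [hset]
    have hint : ∫ ω, f ω ∂μ = 1 := by
      have h2 := hdual μ P hPsa
      rw [hRμ, hPP] at h2
      exact_mod_cast h2.symm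
    have hub : ∀ ω, 0 ≤ f ω ∧ f ω ≤ 1 := by
      intro ω
      obtain ⟨r, hr, hr0, hr1⟩ := density_inner_mem b (hstates (Measure.dirac ω)) hφ
      have h2 : ((f ω : ℝ) : ℂ) = (r : ℂ) := by
        rw [← hdirac ω, hPeq, traceAlong_mul_rankOne, hr]
      have h3 : f ω = r := by exact_mod_cast h2
      rw [h3]; exact ⟨hr0, hr1⟩
    have hfi : Integrable f μ := by
      refine (integrable_const (1:ℝ)).mono' hfmeas.aestronglyMeasurable (ae_of_all _ fun ω => ?_)
      rw [Real.norm_eq_abs, abs_le]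
      exact ⟨by linarith [(hub ω).1], (hub ω).2⟩
    have hgi : Integrable (fun ω => 1 - f ω) μ := (integrable_const 1).sub hfi
    have hg0 : ∫ ω, (1 - f ω) ∂μ = 0 := by
      rw [integral_sub (integrable_const 1) hfi, hint, integral_const]
      simp
    have hae : (fun ω => 1 - f ω) =ᵐ[μ] 0 :=
      (integral_eq_zero_iff_of_nonneg (fun ω => sub_nonneg.2 (hub ω).2) hgi).1 hg0
    have hcompl : μ ((f ⁻¹' {1})ᶜ) = 0 := by
      have h4 : μ {ω | ¬ ((fun ω => 1 - f ω) ω = (0 : Ω → ℝ) ω)} = 0 := ae_iff.1 hae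
      have h5 : (f ⁻¹' {1})ᶜ = {ω | ¬ ((fun ω => 1 - f ω) ω = (0 : Ω → ℝ) ω)} := by
        ext ω
        simp only [Set.mem_compl_iff, Set.mem_preimage, Set.mem_singleton_iff,
          Set.mem_setOf_eq, Pi.zero_apply]
        exact not_congr ((sub_eq_zero.trans eq_comm).symm)
      rw [h5]
      exact h4
    exact (prob_compl_eq_zero_iff hms).1 hcompl
  refine ⟨by rw [hset]; exact hms, hmain, ?_⟩
  have hPdens : IsDensityOp b P := hPeq ▸ rankOne_isDensityOp b hφ
  obtain ⟨μ, hμ, hRμ⟩ := hsurj P hPdens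
  haveI := hμ
  have h1 := hmain μ hRμ
  by_contra hne
  rw [Set.not_nonempty_iff_eq_empty] at hne
  rw [hne] at h1
  simp at h1
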